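/- A matrix M ∈ F^{m×n} whose last r columns are linearly independent has rank at most r if and only if all minors |M|_{J,T} vanish for J ⊆ {1,...,m} with #J = r+1 and T = {t} ∪ {n-r+1,...,n} with 1 ≤ t ≤ n-r. (It suffices to consider column sets containing the last r columns.) -/

import Mathlib

open Matrix

/-- If a matrix has linearly independent columns, then some square row-selection
has nonzero determinant. -/
lemma aux_exists_rows {F : Type*} [Field F] {m k : ℕ}
    (B : Matrix (Fin m) (Fin k) F) (h : LinearIndependent F Bᵀ) :
    ∃ ρ : Fin k → Fin m, Function.Injective ρ ∧ (B.submatrix ρ id).det ≠ 0 := by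
  classical
  -- the rows of `B` span all of `Fin k → F`
  have hrank : B.rank = k := by
    have : Bᵀ.rank = Fintype.card (Fin k) := h.rank_matrix (R := F)
    rwa [Matrix.rank_transpose, Fintype.card_fin] at this
  have hspanTop : Submodule.span F (Set.range fun i => B i) = ⊤ := by
    apply Submodule.eq_top_of_finrank_eq
    have : Bᵀ.rank = Module.finrank F (Submodule.span F (Set.range fun i => B i)) := by
      rw [Matrix.rank_eq_finrank_span_cols]
      congr 1
    rw [Matrix.rank_transpose, hrank] at this
    simp [← this]
  obtain ⟨b, hbsub, hbspan, hbli⟩ :=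
    exists_linearIndependent F (Set.range fun i => B i)
  rw [hspanTop] at hbspan
  have hbfin : b.Finite := Set.Finite.subset (Set.finite_range _) hbsub
  haveI : Fintype b := hbfin.fintype
  have hbasis : Nonempty (Module.Basis b F (Fin k → F)) :=
    ⟨Module.Basis.mk hbli (by rw [Subtype.range_coe, hbspan])⟩
  have hcard : Fintype.card b = k := by
    obtain ⟨bb⟩ := hbasis
    have := Module.finrank_eq_card_basis bb
    simpa [Module.finrank_fintype_fun_eq_card] using this.symm
  let e : Fin k ≃ b := (Fintype.equivFinOfCardEq hcard).symm
  -- pick a preimage row index for each basis vector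
  have hex : ∀ x : b, ∃ i : Fin m, B i = (x : Fin k → F) := fun x => hbsub x.2
  choose g hg using hex
  refine ⟨fun i => g (e i), ?_, ?_⟩
  · intro i j hij
    have : (e i : Fin k → F) = (e j : Fin k → F) := by
      rw [← hg (e i), ← hg (e j)]; exact congrArg B hij
    exact e.injective (Subtype.ext this)
  · have hrows : LinearIndependent F (fun i : Fin k => (B.submatrix (fun i => g (e i)) id) i) := by
      have : (fun i : Fin k => (B.submatrix (fun i => g (e i)) id) i)
          = fun i : Fin k => ((e i : Fin k → F)) := by
        funext i
        ext j
        simp [Matrix.submatrix_apply, hg (e i)]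
      rw [this]
      exact hbli.comp e e.injective
    have := Matrix.linearIndependent_rows_iff_isUnit.1 hrows
    rw [Matrix.isUnit_iff_isUnit_det] at this
    exact this.ne_zero

theorem statement8 {F : Type*} [Field F] (m s r : ℕ)
    (M : Matrix (Fin m) (Fin s ⊕ Fin r) F)
    (hli : LinearIndependent F (fun j : Fin r => fun i => M i (Sum.inr j))) :
    M.rank ≤ r ↔
      ∀ (ρ : Fin (r + 1) → Fin m), Function.Injective ρ → ∀ t : Fin s,
        (M.submatrix ρ
          (Fin.cases (Sum.inl t) (fun k' => Sum.inr k') : Fin (r + 1) → Fin s ⊕ Fin r)).det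
          = 0 := by
  classical
  constructor
  · intro hr ρ hρ t
    set σ : Fin (r + 1) → Fin s ⊕ Fin r := Fin.cases (Sum.inl t) (fun k' => Sum.inr k')
    -- the r+1 columns with indices σ are linearly dependent
    set v : Fin (r + 1) → (Fin m → F) := fun j => fun i => M i (σ j) with hv
    have hmem : ∀ j, v j ∈ LinearMap.range M.mulVecLin := by
      intro j
      refine ⟨Pi.single (σ j) 1, ?_⟩
      simp [mulVecLin_apply, hv]
      rfl
    have hnli : ¬ LinearIndependent F v := by
      intro hvli
      set W := LinearMap.range M.mulVecLin
      have hli' : LinearIndependent F (fun j => (⟨v j, hmem j⟩ : W)) :=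
        hvli.of_comp W.subtype
      have := hli'.fintype_card_le_finrank
      have hWr : Module.finrank F W = M.rank := rfl
      simp only [Fintype.card_fin, hWr] at this
      omega
    rw [Fintype.not_linearIndependent_iff] at hnli
    obtain ⟨c, hc, j₀, hj₀⟩ := hnli
    rw [← Matrix.exists_mulVec_eq_zero_iff]
    refine ⟨c, fun h0 => hj₀ (by rw [h0]; rfl), ?_⟩
    funext i
    have := congrFun hc (ρ i)
    simpa [Matrix.mulVec, dotProduct, hv, mul_comm] using this
  · intro h
    rw [Matrix.rank_eq_finrank_span_cols]
    change Module.finrank F (Submodule.span F (Set.range Mᵀ)) ≤ r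
    set W := Submodule.span F (Set.range fun j : Fin r => (fun i => M i (Sum.inr j)))
    have hcols : ∀ c : Fin s ⊕ Fin r, Mᵀ c ∈ W := by
      rintro (t | j)
      · by_contra hnot
        have hcons : LinearIndependent F
            (Fin.cons (Mᵀ (Sum.inl t)) (fun j : Fin r => fun i => M i (Sum.inr j)) :
              Fin (r + 1) → (Fin m → F)) :=
          hli.fin_cons hnot
        set σ : Fin (r + 1) → Fin s ⊕ Fin r := Fin.cases (Sum.inl t) (fun k' => Sum.inr k')
        set B : Matrix (Fin m) (Fin (r + 1)) F := M.submatrix id σ with hB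
        have hBt : Bᵀ = (Fin.cons (Mᵀ (Sum.inl t)) (fun j : Fin r => fun i => M i (Sum.inr j)) :
              Fin (r + 1) → (Fin m → F)) := by
          funext j i
          refine Fin.cases ?_ (fun k => ?_) j <;> rfl
        obtain ⟨ρ, hρ, hdet⟩ := aux_exists_rows B (by rw [hBt]; exact hcons)
        exact hdet (by simpa [hB, Matrix.submatrix_submatrix] using h ρ hρ t)
      · exact Submodule.subset_span ⟨j, rfl⟩
    have hle : Submodule.span F (Set.range Mᵀ) ≤ W := by
      rw [Submodule.span_le]
      rintro x ⟨c, rfl⟩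
      exact hcols c
    have h1 : Module.finrank F (Submodule.span F (Set.range Mᵀ)) ≤ Module.finrank F W :=
      Submodule.finrank_mono hle
    have h2 : Module.finrank F W ≤ r := by
      have := finrank_span_eq_card (R := F) hli
      simp only [Fintype.card_fin] at this
      exact le_of_eq this
    omega
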